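/- Let ε > 0 with ε‖D‖₂ < 1, E invertible, (A,E) regular. Suppose every eigenvalue of (A,E) has modulus strictly less than some η > 0 and the circle {z : |z| = η} is contained in the interior of σ_ε(A,B,C,D,E), and suppose there is r > η such that the circle {z : |z| = r} is contained in the boundary of σ_ε(A,B,C,D,E). Then ρ_ε(A,B,C,D,E) = r, i.e., r is the maximal modulus of points in σ_ε(A,B,C,D,E). -/

import Mathlib

open Matrix Filter Set

noncomputable def specNorm {p m : ℕ} (A : Matrix (Fin p) (Fin m) ℂ) : ℝ :=
  ‖(Matrix.toEuclideanLin A).toContinuousLinearMap‖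

noncomputable def pertSys {n m p : ℕ} (A : Matrix (Fin n) (Fin n) ℂ) (B : Matrix (Fin n) (Fin m) ℂ)
    (C : Matrix (Fin p) (Fin n) ℂ) (D : Matrix (Fin p) (Fin m) ℂ)
    (Δ : Matrix (Fin m) (Fin p) ℂ) : Matrix (Fin n) (Fin n) ℂ :=
  A + B * Δ * (1 - D * Δ)⁻¹ * C

noncomputable def svSet {n m p : ℕ} (ε : ℝ) (A : Matrix (Fin n) (Fin n) ℂ)
    (B : Matrix (Fin n) (Fin m) ℂ) (C : Matrix (Fin p) (Fin n) ℂ)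
    (D : Matrix (Fin p) (Fin m) ℂ) (E : Matrix (Fin n) (Fin n) ℂ) : Set ℂ :=
  {z | ∃ Δ : Matrix (Fin m) (Fin p) ℂ, specNorm Δ ≤ ε ∧ (z • E - pertSys A B C D Δ).det = 0}

noncomputable def transferFn {n m p : ℕ} (A : Matrix (Fin n) (Fin n) ℂ)
    (B : Matrix (Fin n) (Fin m) ℂ) (C : Matrix (Fin p) (Fin n) ℂ)
    (D : Matrix (Fin p) (Fin m) ℂ) (E : Matrix (Fin n) (Fin n) ℂ) (z : ℂ) :
    Matrix (Fin p) (Fin m) ℂ :=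
  C * (z • E - A)⁻¹ * B + D

open scoped Matrix.Norms.L2Operator ComplexConjugate InnerProductSpace Topology

section Aux

variable {n m p : ℕ}

lemma specNorm_eq_norm (M : Matrix (Fin p) (Fin m) ℂ) : specNorm M = ‖M‖ := rfl

/-- The Weinstein–Aronszajn style determinant chain. -/
lemma det_pert_iff (A : Matrix (Fin n) (Fin n) ℂ) (B : Matrix (Fin n) (Fin m) ℂ)
    (C : Matrix (Fin p) (Fin n) ℂ) (D : Matrix (Fin p) (Fin m) ℂ) (E : Matrix (Fin n) (Fin n) ℂ)
    (Δ : Matrix (Fin m) (Fin p) ℂ) (z : ℂ)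
    (hP : IsUnit (z • E - A).det)
    (hN : IsUnit ((1 : Matrix (Fin p) (Fin p) ℂ) - D * Δ)) :
    (z • E - pertSys A B C D Δ).det = 0 ↔ (1 - transferFn A B C D E z * Δ).det = 0 := by
  set P := z • E - A with hPdef
  set N := ((1 : Matrix (Fin p) (Fin p) ℂ) - D * Δ)⁻¹ with hNdef
  have hNdet : IsUnit ((1 : Matrix (Fin p) (Fin p) ℂ) - D * Δ).det :=
    (Matrix.isUnit_iff_isUnit_det _).mp hN
  have e1 : z • E - pertSys A B C D Δ = P - B * Δ * N * C := by
    rw [pertSys, sub_add_eq_sub_sub]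
  have e2 : P * (1 - P⁻¹ * (B * Δ * N * C)) = P - B * Δ * N * C := by
    rw [mul_sub, mul_one, ← Matrix.mul_assoc, Matrix.mul_nonsing_inv _ hP, Matrix.one_mul]
  have step1 : (z • E - pertSys A B C D Δ).det = 0 ↔ (1 - P⁻¹ * (B * Δ * N * C)).det = 0 := by
    rw [e1, ← e2, Matrix.det_mul]
    constructor
    · intro h
      rcases mul_eq_zero.mp h with h | h
      · exact absurd h hP.ne_zero
      · exact h
    · intro h; rw [h, mul_zero]
  have e3 : P⁻¹ * (B * Δ * N * C) = P⁻¹ * B * Δ * N * C := by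
    simp only [Matrix.mul_assoc]
  have step2 : (1 - P⁻¹ * (B * Δ * N * C)).det = (1 - C * (P⁻¹ * B * Δ * N)).det := by
    rw [e3, ← Matrix.det_one_sub_mul_comm (P⁻¹ * B * Δ * N) C]
  have e4 : C * (P⁻¹ * B * Δ * N) = (C * P⁻¹ * B * Δ) * N := by
    simp only [Matrix.mul_assoc]
  have step3 : (1 - C * (P⁻¹ * B * Δ * N)).det = (1 - N * (C * P⁻¹ * B * Δ)).det := by
    rw [e4, Matrix.det_one_sub_mul_comm]
  have e5 : ((1 : Matrix (Fin p) (Fin p) ℂ) - D * Δ) * (1 - N * (C * P⁻¹ * B * Δ))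
      = 1 - transferFn A B C D E z * Δ := by
    rw [mul_sub, mul_one, ← Matrix.mul_assoc, Matrix.mul_nonsing_inv _ hNdet, Matrix.one_mul,
      transferFn, Matrix.add_mul, ← hPdef]
    abel
  have step4 : (1 - N * (C * P⁻¹ * B * Δ)).det = 0 ↔ (1 - transferFn A B C D E z * Δ).det = 0 := by
    rw [← e5, Matrix.det_mul]
    constructor
    · intro h; rw [h, mul_zero]
    · intro h
      rcases mul_eq_zero.mp h with h | h
      · exact absurd h hNdet.ne_zero
      · exact h
  rw [step1, step2, step3, step4]

lemma one_le_of_singular (G : Matrix (Fin p) (Fin m) ℂ) (Δ : Matrix (Fin m) (Fin p) ℂ) (ε : ℝ)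
    (hΔ : ‖Δ‖ ≤ ε) (h : (1 - G * Δ).det = 0) : 1 ≤ ε * ‖G‖ := by
  by_contra hlt
  push_neg at hlt
  have h1 : ‖G * Δ‖ < 1 := by
    calc ‖G * Δ‖ ≤ ‖G‖ * ‖Δ‖ := Matrix.l2_opNorm_mul G Δ
    _ ≤ ‖G‖ * ε := mul_le_mul_of_nonneg_left hΔ (norm_nonneg _)
    _ = ε * ‖G‖ := mul_comm _ _
    _ < 1 := hlt
  have := (Matrix.isUnit_iff_isUnit_det _).mp (isUnit_one_sub_of_norm_lt_one h1)
  rw [h] at this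
  exact (not_isUnit_zero : ¬ IsUnit (0:ℂ)) this

lemma exists_norm_attained (T : EuclideanSpace ℂ (Fin m) →L[ℂ] EuclideanSpace ℂ (Fin p))
    (hT : 0 < ‖T‖) : ∃ u : EuclideanSpace ℂ (Fin m), ‖u‖ = 1 ∧ ‖T u‖ = ‖T‖ := by
  obtain ⟨x, hx⟩ : ∃ x, T x ≠ 0 := by
    by_contra h
    push_neg at h
    have : T = 0 := ContinuousLinearMap.ext fun x => h x
    rw [this, norm_zero] at hT; exact lt_irrefl _ hT
  have hx0 : x ≠ 0 := fun h => hx (by rw [h, map_zero])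
  have hxn : ‖x‖ ≠ 0 := norm_ne_zero_iff.mpr hx0
  have hsm : (‖x‖⁻¹ • x) ∈ Metric.sphere (0 : EuclideanSpace ℂ (Fin m)) 1 := by
    simp [norm_smul, abs_of_nonneg (inv_nonneg.mpr (norm_nonneg x)), inv_mul_cancel₀ hxn]
  have hcpt : IsCompact (Metric.sphere (0 : EuclideanSpace ℂ (Fin m)) 1) := isCompact_sphere _ _
  obtain ⟨u, hu, hmax⟩ := hcpt.exists_isMaxOn ⟨_, hsm⟩ (T.continuous.norm.continuousOn)
  have hun : ‖u‖ = 1 := by simpa using hu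
  refine ⟨u, hun, le_antisymm (by simpa [hun] using T.le_opNorm u) ?_⟩
  refine T.opNorm_le_bound (norm_nonneg _) fun y => ?_
  rcases eq_or_ne y 0 with rfl | hy
  · simp
  · have hyn : ‖y‖ ≠ 0 := norm_ne_zero_iff.mpr hy
    have hys : (‖y‖⁻¹ • y) ∈ Metric.sphere (0 : EuclideanSpace ℂ (Fin m)) 1 := by
      simp [norm_smul, abs_of_nonneg (inv_nonneg.mpr (norm_nonneg y)), inv_mul_cancel₀ hyn]
    have h2 : ‖T (‖y‖⁻¹ • y)‖ ≤ ‖T u‖ := hmax hys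
    rw [ContinuousLinearMap.map_smul_of_tower, norm_smul] at h2
    have h3 : ‖y‖⁻¹ * ‖T y‖ ≤ ‖T u‖ := by
      simpa [abs_of_nonneg (inv_nonneg.mpr (norm_nonneg y))] using h2
    calc ‖T y‖ = ‖y‖ * (‖y‖⁻¹ * ‖T y‖) := by field_simp
    _ ≤ ‖y‖ * ‖T u‖ := mul_le_mul_of_nonneg_left h3 (norm_nonneg _)
    _ = ‖T u‖ * ‖y‖ := mul_comm _ _

lemma exists_rank_one (G : Matrix (Fin p) (Fin m) ℂ) (ε : ℝ) (hε : 0 < ε)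
    (hG : 1 ≤ ε * ‖G‖) :
    ∃ Δ : Matrix (Fin m) (Fin p) ℂ, ‖Δ‖ ≤ ε ∧ (1 - G * Δ).det = 0 := by
  classical
  set T : EuclideanSpace ℂ (Fin m) →L[ℂ] EuclideanSpace ℂ (Fin p) :=
    (Matrix.toEuclideanLin G).toContinuousLinearMap with hTdef
  have hTnorm : ‖T‖ = ‖G‖ := rfl
  have hGpos : 0 < ‖G‖ := by
    rcases lt_or_ge 0 ‖G‖ with h | h
    · exact h
    · exfalso; nlinarith
  obtain ⟨u, hu1, huT⟩ := exists_norm_attained T (by rw [hTnorm]; exact hGpos)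
  set w : EuclideanSpace ℂ (Fin p) := T u with hwdef
  have hwnorm : ‖w‖ = ‖G‖ := by rw [hwdef, huT, hTnorm]
  have hwpos : 0 < ‖w‖ := by rw [hwnorm]; exact hGpos
  set u' : Fin m → ℂ := WithLp.equiv 2 _ u with hu'def
  set w' : Fin p → ℂ := WithLp.equiv 2 _ w with hw'def
  have hmulvec : G *ᵥ u' = w' := by
    rw [hw'def, hwdef, hTdef]
    have : T u = Matrix.toEuclideanLin G u := rfl
    rw [this]; rfl
  set c : ℂ := ⟪w, w⟫_ℂ with hcdef
  have hcnorm : ‖c‖ = ‖w‖ ^ 2 := by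
    rw [hcdef, inner_self_eq_norm_sq_to_K]
    simp [RCLike.norm_ofReal, abs_of_nonneg hwpos.le]
  have hc0 : c ≠ 0 := by
    rw [hcdef]
    exact fun h => hwpos.ne' (norm_eq_zero.mpr (inner_self_eq_zero.mp h))
  have hsum : ∀ x : EuclideanSpace ℂ (Fin p),
      ∑ j, conj (w' j) * (WithLp.equiv 2 _ x) j = ⟪w, x⟫_ℂ := by
    intro x
    rw [PiLp.inner_apply]
    congr 1
    funext j; rw [RCLike.inner_apply']; rfl
  have hww : ∑ j, conj (w' j) * w' j = c := hsum w
  set Δ : Matrix (Fin m) (Fin p) ℂ := Matrix.of (fun i j => u' i * conj (w' j) / c) with hΔdef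
  have hΔvec : ∀ x : Fin p → ℂ, Δ *ᵥ x = ((∑ j, conj (w' j) * x j) / c) • u' := by
    intro x
    funext i
    simp only [Matrix.mulVec, dotProduct, hΔdef, Matrix.of_apply, Pi.smul_apply,
      smul_eq_mul]
    calc ∑ j, u' i * conj (w' j) / c * x j = ∑ j, conj (w' j) * x j / c * u' i := by
          apply Finset.sum_congr rfl; intros; ring
    _ = (∑ j, conj (w' j) * x j / c) * u' i := (Finset.sum_mul _ _ _).symm
    _ = (∑ j, conj (w' j) * x j) / c * u' i := by rw [Finset.sum_div]
  have hΔw : Δ *ᵥ w' = u' := by rw [hΔvec, hww, div_self hc0, one_smul]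
  have hw'0 : w' ≠ 0 := by
    intro h
    have hw0 : w = 0 := by
      have := congrArg (WithLp.equiv 2 (Fin p → ℂ)).symm h
      simpa [hw'def] using this
    rw [hw0, norm_zero] at hwpos; exact lt_irrefl _ hwpos
  have hεw : 1 ≤ ε * ‖w‖ := by rw [hwnorm]; exact hG
  clear_value Δ c w' u' w T
  refine ⟨Δ, ?_, ?_⟩
  · rw [show (‖Δ‖ : ℝ) = ‖(Matrix.toEuclideanLin Δ).toContinuousLinearMap‖ from rfl]
    refine ContinuousLinearMap.opNorm_le_bound _ hε.le fun x => ?_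
    have happ : (Matrix.toEuclideanLin Δ).toContinuousLinearMap x
        = (WithLp.equiv 2 (Fin m → ℂ)).symm (Δ *ᵥ (WithLp.equiv 2 _ x)) := by
      rw [LinearMap.coe_toContinuousLinearMap', Matrix.toEuclideanLin_apply]; rfl
    have hsymm : (WithLp.equiv 2 (Fin m → ℂ)).symm u' = u := by simp [hu'def]
    rw [happ, hΔvec, hsum x, WithLp.equiv_symm_apply, WithLp.toLp_smul, ← WithLp.equiv_symm_apply, hsymm, norm_smul, hu1, mul_one]
    have hinner : ‖⟪w, x⟫_ℂ‖ ≤ ‖w‖ * ‖x‖ := norm_inner_le_norm w x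
    rw [norm_div, hcnorm, div_le_iff₀ (by positivity)]
    calc ‖⟪w, x⟫_ℂ‖ ≤ ‖w‖ * ‖x‖ := hinner
    _ ≤ (ε * ‖w‖) * (‖w‖ * ‖x‖) := by
        nlinarith [mul_nonneg (sub_nonneg.mpr hεw) (mul_nonneg (norm_nonneg w) (norm_nonneg x))]
    _ = ε * ‖x‖ * ‖w‖ ^ 2 := by ring
  · rw [← Matrix.exists_mulVec_eq_zero_iff]
    refine ⟨w', hw'0, ?_⟩
    rw [Matrix.sub_mulVec, Matrix.one_mulVec, ← Matrix.mulVec_mulVec, hΔw, hmulvec, sub_self]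

end Aux

noncomputable def hFun {n m p : ℕ} (A : Matrix (Fin n) (Fin n) ℂ) (B : Matrix (Fin n) (Fin m) ℂ)
    (C : Matrix (Fin p) (Fin n) ℂ) (D : Matrix (Fin p) (Fin m) ℂ) (E : Matrix (Fin n) (Fin n) ℂ)
    (ζ : ℂ) : Matrix (Fin p) (Fin m) ℂ :=
  ζ • (C * Ring.inverse (E - ζ • A) * B) + D

section Analytic
variable {n m p : ℕ} (A : Matrix (Fin n) (Fin n) ℂ) (B : Matrix (Fin n) (Fin m) ℂ)
  (C : Matrix (Fin p) (Fin n) ℂ) (D : Matrix (Fin p) (Fin m) ℂ) (E : Matrix (Fin n) (Fin n) ℂ)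

lemma hFun_zero : hFun A B C D E 0 = D := by simp [hFun]

lemma isUnit_E_sub {η : ℝ} (hη : 0 < η) (hE : IsUnit E)
    (heig : ∀ z : ℂ, (z • E - A).det = 0 → ‖z‖ < η)
    {ζ : ℂ} (hζ : ‖ζ‖ < η⁻¹) : IsUnit (E - ζ • A) := by
  rcases eq_or_ne ζ 0 with rfl | hζ0
  · simpa using hE
  · have habs : 0 < ‖ζ‖ := by
      simpa [norm_pos_iff] using hζ0
    have hrec : η < ‖ζ⁻¹‖ := by
      rw [norm_inv]
      rw [lt_inv_comm₀ hη habs] at *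
      · exact hζ
    have hdet : ((ζ⁻¹ : ℂ) • E - A).det ≠ 0 := fun h => absurd (heig _ h) (not_lt.mpr hrec.le)
    have hfact : E - ζ • A = ζ • ((ζ⁻¹ : ℂ) • E - A) := by
      rw [smul_sub, smul_smul, mul_inv_cancel₀ hζ0, one_smul]
    rw [hfact, Matrix.isUnit_iff_isUnit_det, Matrix.det_smul, isUnit_iff_ne_zero]
    exact mul_ne_zero (pow_ne_zero _ hζ0) hdet

/-- `X ↦ C * X * B` as a linear map. -/
noncomputable def mulLR : Matrix (Fin n) (Fin n) ℂ →ₗ[ℂ] Matrix (Fin p) (Fin m) ℂ where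
  toFun X := C * X * B
  map_add' X Y := by rw [Matrix.mul_add, Matrix.add_mul]
  map_smul' a X := by simp only [RingHom.id_apply]; rw [Matrix.mul_smul, Matrix.smul_mul]

lemma hFun_differentiableOn {η : ℝ} (hη : 0 < η) (hE : IsUnit E)
    (heig : ∀ z : ℂ, (z • E - A).det = 0 → ‖z‖ < η) :
    DifferentiableOn ℂ (hFun A B C D E) (Metric.ball (0:ℂ) η⁻¹) := by
  have d1 : DifferentiableOn ℂ (fun ζ : ℂ => E - ζ • A) (Metric.ball (0:ℂ) η⁻¹) :=
    ((differentiable_const E).sub ((differentiable_id).smul_const A)).differentiableOn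
  have d2 : DifferentiableOn ℂ (fun ζ : ℂ => Ring.inverse (E - ζ • A))
      (Metric.ball (0:ℂ) η⁻¹) := by
    refine d1.inverse fun ζ hζ => ?_
    refine isUnit_E_sub A E hη hE heig ?_
    simpa [Complex.dist_eq] using (Metric.mem_ball.mp hζ)
  have d3 : DifferentiableOn ℂ
      (fun ζ : ℂ => (mulLR B C (n := n)).toContinuousLinearMap (Ring.inverse (E - ζ • A)))
      (Metric.ball (0:ℂ) η⁻¹) :=
    ((mulLR B C (n := n)).toContinuousLinearMap.differentiable).comp_differentiableOn d2
  have d4 : DifferentiableOn ℂ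
      (fun ζ : ℂ => ζ • ((mulLR B C (n := n)).toContinuousLinearMap (Ring.inverse (E - ζ • A))))
      (Metric.ball (0:ℂ) η⁻¹) := (differentiable_id.differentiableOn).smul d3
  have heq : hFun A B C D E = fun ζ : ℂ =>
      ζ • ((mulLR B C (n := n)).toContinuousLinearMap (Ring.inverse (E - ζ • A))) + D := by
    funext ζ
    simp only [hFun, LinearMap.coe_toContinuousLinearMap', mulLR, LinearMap.coe_mk, AddHom.coe_mk]
  rw [heq]
  exact d4.add_const D

lemma transfer_eq_hFun {z : ℂ} (hz0 : z ≠ 0) (hdet : IsUnit (z • E - A).det) :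
    transferFn A B C D E z = hFun A B C D E z⁻¹ := by
  have hfact : E - (z⁻¹ : ℂ) • A = (z⁻¹ : ℂ) • (z • E - A) := by
    rw [smul_sub, smul_smul, inv_mul_cancel₀ hz0, one_smul]
  have hinv : Ring.inverse (E - (z⁻¹ : ℂ) • A) = z • (z • E - A)⁻¹ := by
    rw [← Matrix.nonsing_inv_eq_ringInverse, hfact]
    refine Matrix.inv_eq_right_inv ?_
    rw [Matrix.smul_mul, Matrix.mul_smul, smul_smul, inv_mul_cancel₀ hz0, one_smul,
      Matrix.mul_nonsing_inv _ hdet]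
  rw [hFun, hinv, transferFn]
  congr 1
  rw [Matrix.mul_smul, Matrix.smul_mul, smul_smul, inv_mul_cancel₀ hz0, one_smul]

end Analytic

theorem boundary_circle_is_radius {n m p : ℕ} (A : Matrix (Fin n) (Fin n) ℂ)
    (B : Matrix (Fin n) (Fin m) ℂ) (C : Matrix (Fin p) (Fin n) ℂ)
    (D : Matrix (Fin p) (Fin m) ℂ) (E : Matrix (Fin n) (Fin n) ℂ)
    (hE : IsUnit E) (hreg : ∃ w : ℂ, (w • E - A).det ≠ 0)
    (ε : ℝ) (hε : 0 < ε) (hεD : ε * specNorm D < 1)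
    (η : ℝ) (hη : 0 < η)
    (heig : ∀ z : ℂ, (z • E - A).det = 0 → ‖z‖ < η)
    (hcirc : {z : ℂ | ‖z‖ = η} ⊆ interior (svSet ε A B C D E))
    (r : ℝ) (hr : η < r)
    (hbd : {z : ℂ | ‖z‖ = r} ⊆ frontier (svSet ε A B C D E)) :
    IsGreatest ((fun z : ℂ => ‖z‖) '' svSet ε A B C D E) r := by
  have hr0 : 0 < r := hη.trans hr
  set S := svSet ε A B C D E with hSdef
  set Gf := transferFn A B C D E with hGfdef
  set h := hFun A B C D E with hhdef
  -- no eigenvalues of the pencil with modulus ≥ η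
  have F0 : ∀ z : ℂ, η ≤ ‖z‖ → IsUnit (z • E - A).det := by
    intro z hz
    rw [isUnit_iff_ne_zero]
    exact fun hdet => absurd (heig z hdet) (not_lt.mpr hz)
  -- the 1 - D * Δ factor is invertible whenever ‖Δ‖ ≤ ε
  have FN : ∀ Δ : Matrix (Fin m) (Fin p) ℂ, ‖Δ‖ ≤ ε →
      IsUnit ((1 : Matrix (Fin p) (Fin p) ℂ) - D * Δ) := by
    intro Δ hΔ
    refine isUnit_one_sub_of_norm_lt_one ?_
    calc ‖D * Δ‖ ≤ ‖D‖ * ‖Δ‖ := Matrix.l2_opNorm_mul D Δ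
    _ ≤ ‖D‖ * ε := mul_le_mul_of_nonneg_left hΔ (norm_nonneg _)
    _ = ε * specNorm D := by rw [specNorm_eq_norm, mul_comm]
    _ < 1 := hεD
  -- Lemma A
  have FA : ∀ z : ℂ, η ≤ ‖z‖ → z ∈ S → 1 ≤ ε * ‖Gf z‖ := by
    intro z hz ⟨Δ, hΔ, hdet⟩
    rw [specNorm_eq_norm] at hΔ
    exact one_le_of_singular _ Δ ε hΔ
      ((det_pert_iff A B C D E Δ z (F0 z hz) (FN Δ hΔ)).mp hdet)
  -- Lemma B
  have FB : ∀ z : ℂ, η ≤ ‖z‖ → 1 ≤ ε * ‖Gf z‖ → z ∈ S := by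
    intro z hz hG
    obtain ⟨Δ, hΔ, hdet⟩ := exists_rank_one (Gf z) ε hε hG
    exact ⟨Δ, by rw [specNorm_eq_norm]; exact hΔ,
      (det_pert_iff A B C D E Δ z (F0 z hz) (FN Δ hΔ)).mpr hdet⟩
  -- identification with the analytic function h in 1/z coordinates
  have Fident : ∀ z : ℂ, η < ‖z‖ → Gf z = h z⁻¹ := by
    intro z hz
    have hz0 : z ≠ 0 := by
      intro hz0
      rw [hz0] at hz; simp at hz; linarith
    exact transfer_eq_hFun A B C D E hz0 (F0 z hz.le)
  have hinvlt : r⁻¹ < η⁻¹ := by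
    exact inv_strictAnti₀ hη hr
  have hdiff : DifferentiableOn ℂ h (Metric.ball (0:ℂ) η⁻¹) :=
    hFun_differentiableOn A B C D E hη hE heig
  -- continuity of z ↦ h z⁻¹ outside the circle of radius η
  have Fcont : ∀ z : ℂ, η < ‖z‖ → ContinuousAt (fun y : ℂ => h y⁻¹) z := by
    intro z hz
    have hz0 : z ≠ 0 := by
      intro hz0; rw [hz0] at hz; simp at hz; linarith
    have hmem : z⁻¹ ∈ Metric.ball (0:ℂ) η⁻¹ := by
      rw [Metric.mem_ball, Complex.dist_eq, sub_zero, norm_inv]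
      exact inv_strictAnti₀ hη hz
    have hc : ContinuousAt h z⁻¹ :=
      (hdiff.continuousOn).continuousAt (Metric.isOpen_ball.mem_nhds hmem)
    exact hc.comp (continuousAt_inv₀ hz0)
  -- the norm bound on the circle of radius r, from the frontier hypothesis
  have Fφle : ∀ w : ℂ, ‖w‖ = r → ε * ‖Gf w‖ ≤ 1 := by
    intro w hw
    by_contra hlt
    push_neg at hlt
    have hwO : η < ‖w‖ := by rw [hw]; exact hr
    set O₁ : Set ℂ := {z | η < ‖z‖} with hO₁def
    have hO₁open : IsOpen O₁ := isOpen_lt continuous_const continuous_norm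
    have hcontO : ContinuousOn (fun z : ℂ => ε * ‖h z⁻¹‖) O₁ := fun z hz =>
      ((continuousAt_const.mul (Fcont z hz).norm).continuousWithinAt)
    set V : Set ℂ := O₁ ∩ (fun z : ℂ => ε * ‖h z⁻¹‖) ⁻¹' Ioi 1 with hVdef
    have hVopen : IsOpen V := hcontO.isOpen_inter_preimage hO₁open isOpen_Ioi
    have hwV : w ∈ V := by
      refine ⟨hwO, ?_⟩
      have := Fident w hwO
      simp only [mem_preimage, mem_Ioi]
      rw [← this]
      exact hlt
    have hVS : V ⊆ S := by
      intro z ⟨hz1, hz2⟩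
      refine FB z (le_of_lt hz1) ?_
      rw [Fident z hz1]
      exact le_of_lt hz2
    have hwint : w ∈ interior S := interior_maximal hVS hVopen hwV
    exact (hbd hw).2 hwint
  -- every element of S has modulus ≤ r  (max modulus principle)
  have Fmax : ∀ z ∈ S, ‖z‖ ≤ r := by
    intro z₀ hz₀
    by_contra hgt
    push_neg at hgt
    have hz₀η : η < ‖z₀‖ := hr.trans hgt
    have hζ₀ : ‖z₀⁻¹‖ < r⁻¹ := by
      rw [norm_inv]
      exact inv_strictAnti₀ hr0 hgt
    have hζ₀G : 1 ≤ ε * ‖h z₀⁻¹‖ := by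
      rw [← Fident z₀ hz₀η]
      exact FA z₀ hz₀η.le hz₀
    set K := Metric.closedBall (0:ℂ) r⁻¹ with hKdef
    have hKsub : K ⊆ Metric.ball (0:ℂ) η⁻¹ := Metric.closedBall_subset_ball hinvlt
    have hcontK : ContinuousOn h K := (hdiff.mono hKsub).continuousOn
    have habsK : ∀ y : ℂ, y ∈ K ↔ ‖y‖ ≤ r⁻¹ := by
      intro y
      rw [hKdef, Metric.mem_closedBall, Complex.dist_eq, sub_zero]
    have hζ₀K : z₀⁻¹ ∈ K := (habsK _).mpr hζ₀.le
    obtain ⟨c, hcK, hcmax⟩ := (isCompact_closedBall (0:ℂ) r⁻¹).exists_isMaxOn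
      ⟨0, by simp [hKdef, Metric.mem_closedBall]; exact hr0.le⟩ hcontK.norm
    -- find an interior maximum point
    obtain ⟨c', hc'ball, hc'max, hc'ge⟩ :
        ∃ c' : ℂ, ‖c'‖ < r⁻¹ ∧ IsMaxOn (norm ∘ h) K c' ∧ 1 ≤ ε * ‖h c'‖ := by
      by_cases hcb : ‖c‖ < r⁻¹
      · refine ⟨c, hcb, hcmax, ?_⟩
        calc (1:ℝ) ≤ ε * ‖h z₀⁻¹‖ := hζ₀G
        _ ≤ ε * ‖h c‖ := mul_le_mul_of_nonneg_left (hcmax hζ₀K) hε.le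
      · have hceq : ‖c‖ = r⁻¹ := le_antisymm ((habsK _).mp hcK) (not_lt.mp hcb)
        have hcinv : ‖c⁻¹‖ = r := by
          rw [norm_inv, hceq, inv_inv]
        have hcle : ε * ‖h c‖ ≤ 1 := by
          have := Fφle c⁻¹ hcinv
          rwa [Fident c⁻¹ (by rw [hcinv]; exact hr), inv_inv] at this
        refine ⟨z₀⁻¹, hζ₀, fun y hy => ?_, hζ₀G⟩
        have h1 : ‖h y‖ ≤ ‖h c‖ := hcmax hy
        have h2 : ‖h c‖ ≤ ‖h z₀⁻¹‖ := by
          have : ε * ‖h c‖ ≤ ε * ‖h z₀⁻¹‖ := hcle.trans hζ₀G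
          exact le_of_mul_le_mul_left this hε
        exact h1.trans h2
    -- maximum modulus principle on the ball of radius r⁻¹
    have hUconn : IsPreconnected (Metric.ball (0:ℂ) r⁻¹) := (convex_ball _ _).isPreconnected
    have hballK : Metric.ball (0:ℂ) r⁻¹ ⊆ K := Metric.ball_subset_closedBall
    have hdc : DiffContOnCl ℂ h (Metric.ball (0:ℂ) r⁻¹) := by
      refine ⟨hdiff.mono (Metric.ball_subset_ball hinvlt.le), ?_⟩
      exact hcontK.mono (Metric.closure_ball_subset_closedBall)
    have hc'mem : c' ∈ Metric.ball (0:ℂ) r⁻¹ := by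
      rw [Metric.mem_ball, Complex.dist_eq, sub_zero]
      exact hc'ball
    have heqOn := Complex.norm_eqOn_closure_of_isPreconnected_of_isMaxOn hUconn
      Metric.isOpen_ball hdc hc'mem (fun y hy => hc'max (hballK hy))
    have h0mem : (0:ℂ) ∈ closure (Metric.ball (0:ℂ) r⁻¹) :=
      subset_closure (by rw [Metric.mem_ball, dist_self]; positivity)
    have h0 : ‖h 0‖ = ‖h c'‖ := heqOn h0mem
    rw [hhdef, hFun_zero] at h0
    have : (1:ℝ) ≤ ε * ‖D‖ := by rw [← h0] at hc'ge; exact hc'ge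
    rw [← specNorm_eq_norm] at this
    linarith
  -- r is attained
  have Fmem : r ∈ (fun z : ℂ => ‖z‖) '' S := by
    set w : ℂ := (r : ℂ) with hwdef
    have hw : ‖w‖ = r := by
      rw [hwdef, Complex.norm_real, Real.norm_eq_abs, abs_of_pos hr0]
    have hwη : η < ‖w‖ := by rw [hw]; exact hr
    have hwcl : w ∈ closure S := frontier_subset_closure (hbd hw)
    have hne : (𝓝[S] w).NeBot := mem_closure_iff_nhdsWithin_neBot.mp hwcl
    have hcontw : ContinuousAt (fun z : ℂ => ε * ‖h z⁻¹‖) w :=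
      continuousAt_const.mul (Fcont w hwη).norm
    have htend : Tendsto (fun z : ℂ => ε * ‖h z⁻¹‖) (𝓝[S] w) (𝓝 (ε * ‖h w⁻¹‖)) :=
      hcontw.tendsto.mono_left nhdsWithin_le_nhds
    have hev : ∀ᶠ z in 𝓝[S] w, 1 ≤ ε * ‖h z⁻¹‖ := by
      have hO : ∀ᶠ z in 𝓝[S] w, η < ‖z‖ := by
        refine eventually_nhdsWithin_of_eventually_nhds ?_
        have : IsOpen {z : ℂ | η < ‖z‖} :=
          isOpen_lt continuous_const continuous_norm
        exact this.eventually_mem hwη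
      have hS : ∀ᶠ z in 𝓝[S] w, z ∈ S := eventually_mem_nhdsWithin
      filter_upwards [hO, hS] with z hz1 hz2
      rw [← Fident z hz1]
      exact FA z hz1.le hz2
    have hwG : 1 ≤ ε * ‖h w⁻¹‖ := ge_of_tendsto htend hev
    have hwS : w ∈ S := by
      refine FB w hwη.le ?_
      rw [Fident w hwη]
      exact hwG
    exact ⟨w, hwS, hw⟩
  constructor
  · exact Fmem
  · rintro y ⟨z, hzS, rfl⟩
    exact Fmax z hzS
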